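/- For every r ≥ 2 there exists a faithful representation of the free 2-step nilpotent Lie algebra of rank r of dimension 2r - 1 (of type (r-1, 1, r-1)). -/

import Mathlib

/-- The free 2-step nilpotent Lie algebra of rank `r`: `𝕂^r ⊕ Λ²𝕂^r`, where
`Λ²𝕂^r` is modeled by coordinates indexed by pairs `i < j`. -/
abbrev FreeNilp2 (K : Type) [Field K] (r : ℕ) : Type :=
  (Fin r → K) × ({p : Fin r × Fin r // p.1 < p.2} → K)

/-- The wedge `x ∧ y` in coordinates. -/
def wedge {K : Type} [Field K] {r : ℕ} (x y : Fin r → K) :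
    {p : Fin r × Fin r // p.1 < p.2} → K :=
  fun p => x p.1.1 * y p.1.2 - x p.1.2 * y p.1.1

noncomputable instance (K : Type) [Field K] (r : ℕ) : LieRing (FreeNilp2 K r) where
  bracket a b := (0, wedge a.1 b.1)
  add_lie a b c := by
    refine Prod.ext (by simp) (funext fun p => ?_)
    show wedge (a.1 + b.1) c.1 p = wedge a.1 c.1 p + wedge b.1 c.1 p
    simp [wedge]; ring
  lie_add a b c := by
    refine Prod.ext (by simp) (funext fun p => ?_)
    show wedge a.1 (b.1 + c.1) p = wedge a.1 b.1 p + wedge a.1 c.1 p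
    simp [wedge]; ring
  lie_self a := by
    refine Prod.ext (by simp) (funext fun p => ?_)
    show wedge a.1 a.1 p = 0
    simp [wedge]; ring
  leibniz_lie a b c := by
    refine Prod.ext (by simp) (funext fun p => ?_)
    show wedge a.1 (0 : Fin r → K) p =
      wedge (0 : Fin r → K) c.1 p + wedge b.1 (0 : Fin r → K) p
    simp [wedge]

noncomputable instance (K : Type) [Field K] (r : ℕ) : LieAlgebra K (FreeNilp2 K r) where
  lie_smul t a b := by
    refine Prod.ext (by show (0 : Fin r → K) = t • (0 : Fin r → K); simp) (funext fun p => ?_)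
    show wedge a.1 (t • b.1) p = t * wedge a.1 b.1 p
    simp [wedge]; ring

/-- The block index of a basis vector, for block sizes `a, p, b`. -/
def blk {a p b : ℕ} : Fin a ⊕ Fin p ⊕ Fin b → Fin 3
  | Sum.inl _ => 0
  | Sum.inr (Sum.inl _) => 1
  | Sum.inr (Sum.inr _) => 2

/-- A matrix is strictly block upper triangular (blocks of sizes `a, p, b`) if
its only nonzero entries lie in the blocks `(1,2)`, `(1,3)` and `(2,3)`. -/
def StrictBlockUpper {K : Type} [Field K] {a p b : ℕ}
    (M : Matrix (Fin a ⊕ Fin p ⊕ Fin b) (Fin a ⊕ Fin p ⊕ Fin b) K) : Prop :=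
  ∀ i j, ¬ blk i < blk j → M i j = 0

attribute [local instance 100] LieRing.ofAssociativeRing

/-- Skew-symmetric extension of coordinates on pairs `i < j`. -/
def Wext {K : Type} [Field K] {r : ℕ} (u : {p : Fin r × Fin r // p.1 < p.2} → K)
    (a b : Fin r) : K :=
  if h : a < b then u ⟨(a, b), h⟩ else if h' : b < a then -u ⟨(b, a), h'⟩ else 0

lemma Wext_wedge {K : Type} [Field K] {r : ℕ} (x y : Fin r → K) (a b : Fin r) :
    Wext (wedge x y) a b = x a * y b - x b * y a := by
  unfold Wext wedge
  rcases lt_trichotomy a b with h | h | h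
  · rw [dif_pos h]
  · subst h; rw [dif_neg (lt_irrefl a), dif_neg (lt_irrefl a)]; ring
  · rw [dif_neg (not_lt_of_gt h), dif_pos h]; ring

lemma Wext_add {K : Type} [Field K] {r : ℕ} (u v : {p : Fin r × Fin r // p.1 < p.2} → K)
    (a b : Fin r) : Wext (u + v) a b = Wext u a b + Wext v a b := by
  unfold Wext; split_ifs <;> simp <;> ring

lemma Wext_smul {K : Type} [Field K] {r : ℕ} (t : K) (u : {p : Fin r × Fin r // p.1 < p.2} → K)
    (a b : Fin r) : Wext (t • u) a b = t * Wext u a b := by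
  unfold Wext; split_ifs <;> simp <;> ring

/-- The matrix of the representation. -/
def repFun {K : Type} [Field K] {r : ℕ} (x : FreeNilp2 K r) :
    Matrix (Fin (r-1) ⊕ Fin 1 ⊕ Fin (r-1)) (Fin (r-1) ⊕ Fin 1 ⊕ Fin (r-1)) K :=
  fun i j => match i, j with
  | Sum.inl i, Sum.inr (Sum.inl _) => x.1 ⟨i.val, by omega⟩
  | Sum.inl i, Sum.inr (Sum.inr j) =>
      Wext x.2 ⟨i.val, by omega⟩ ⟨j.val + 1, by omega⟩
  | Sum.inr (Sum.inl _), Sum.inr (Sum.inr j) => x.1 ⟨j.val + 1, by omega⟩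
  | _, _ => 0

/-- The representation as a Lie algebra morphism. -/
noncomputable def rep (K : Type) [Field K] (r : ℕ) :
    FreeNilp2 K r →ₗ⁅K⁆
      Matrix (Fin (r-1) ⊕ Fin 1 ⊕ Fin (r-1)) (Fin (r-1) ⊕ Fin 1 ⊕ Fin (r-1)) K where
  toFun := repFun
  map_add' x y := by
    funext i j
    rcases i with i | i | i <;> rcases j with j | j | j <;>
      simp [repFun, Wext_add]
  map_smul' t x := by
    funext i j
    rcases i with i | i | i <;> rcases j with j | j | j <;>
      simp [repFun, Wext_smul]
  map_lie' {x y} := by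
    show repFun (0, wedge x.1 y.1) = ⁅repFun x, repFun y⁆
    rw [Ring.lie_def]
    funext i j
    rcases i with i | i | i <;> rcases j with j | j | j <;>
      simp [repFun, Matrix.mul_apply, Matrix.sub_apply, Fintype.sum_sum_type,
        Fin.sum_univ_one, Wext_wedge, mul_comm]

lemma rep_ker {K : Type} [Field K] {r : ℕ} (hr : 2 ≤ r) (x : FreeNilp2 K r)
    (hx : repFun x = 0) : x = 0 := by
  obtain ⟨X, u⟩ := x
  refine Prod.ext ?_ ?_
  · funext i
    by_cases h : i.val < r - 1
    · have key := congrFun (congrFun hx (Sum.inl ⟨i.val, h⟩)) (Sum.inr (Sum.inl 0))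
      simpa [repFun] using key
    · have hi : 1 ≤ i.val := by omega
      have key := congrFun (congrFun hx (Sum.inr (Sum.inl 0)))
        (Sum.inr (Sum.inr ⟨i.val - 1, by omega⟩))
      have e : (⟨i.val - 1 + 1, by omega⟩ : Fin r) = i := Fin.ext (by simp; omega)
      simpa [repFun, e] using key
  · funext p
    obtain ⟨⟨a, b⟩, hab⟩ := p
    have hab' : a.val < b.val := hab
    have key := congrFun (congrFun hx (Sum.inl ⟨a.val, by omega⟩))
      (Sum.inr (Sum.inr ⟨b.val - 1, by omega⟩))
    have ea : (⟨a.val, by omega⟩ : Fin r) = a := Fin.ext rfl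
    have eb : (⟨b.val - 1 + 1, by omega⟩ : Fin r) = b := Fin.ext (by simp; omega)
    simp only [repFun, Matrix.zero_apply, ea, eb] at key
    unfold Wext at key
    rw [dif_pos hab] at key
    simpa using key
/-- For every `r ≥ 2` there is a faithful representation of the free 2-step
nilpotent Lie algebra of rank `r` of dimension `2r - 1`, of type `(r-1, 1, r-1)`. -/
theorem exists_faithful_type_r1 (K : Type) [Field K] [CharZero K] (r : ℕ) (hr : 2 ≤ r) :
    ∃ π : FreeNilp2 K r →ₗ⁅K⁆
        Matrix (Fin (r-1) ⊕ Fin 1 ⊕ Fin (r-1)) (Fin (r-1) ⊕ Fin 1 ⊕ Fin (r-1)) K,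
      Function.Injective π ∧ ∀ X : FreeNilp2 K r, StrictBlockUpper (π X) := by

  refine ⟨rep K r, ?_, ?_⟩
  · intro x y h
    have hz : repFun (x - y) = 0 := by
      have h2 : (rep K r).toLinearMap (x - y) = 0 := by
        rw [map_sub]
        show rep K r x - rep K r y = 0
        rw [h, sub_self]
      exact h2
    have := rep_ker hr _ hz
    exact sub_eq_zero.mp this
  · intro x i j hij
    show repFun x i j = 0
    rcases i with i | i | i <;> rcases j with j | j | j <;>
      first
        | rfl
        | simp [blk, Fin.lt_def] at hij
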